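/- arXiv:2111.11569 — 3 statements merged into one kernel-verified Lean document; each statement's English description precedes it below -/
import Mathlib

section
/- Let G be a locally compact, second-countable, Hausdorff abelian topological group with a Haar measure, let D ⊆ G be a closed discrete set, and let c : G → ℂ be a function vanishing outside D such that the weighted Dirac comb with weight function c is a positive definite measure. Then for every subgroup L of G, the function c is positive definite on L; in particular (taking L = G), c is a positive definite function on G. -/
open MeasureTheory
open scoped ComplexOrder

/-- `f` is positive definite on the subset `S` of an additive abelian group. -/
def IsPositiveDefiniteOn {G : Type*} [AddCommGroup G] (f : G → ℂ) (S : Set G) : Prop :=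
  ∀ (n : ℕ) (x : Fin n → G), (∀ k, x k ∈ S) → ∀ c : Fin n → ℂ,
    0 ≤ ∑ k, ∑ l, c k * (starRingEnd ℂ) (c l) * f (x k - x l)

/-- The weighted Dirac comb with weight function `c` is a positive definite measure:
for every continuous compactly supported `φ`, the sum `∑ₓ c(x)·(φ ⋆ φ̃)(x)` is real
and nonnegative, where `φ̃(y) = conj (φ (-y))` and the convolution is w.r.t. `μ`. -/
def DiracCombIsPositiveDefinite {G : Type*} [AddCommGroup G] [TopologicalSpace G]
    [IsTopologicalAddGroup G] [MeasurableSpace G] (μ : Measure G) (c : G → ℂ) : Prop :=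
  ∀ φ : G → ℂ, Continuous φ → HasCompactSupport φ →
    0 ≤ ∑' x : G, c x *
      MeasureTheory.convolution φ (fun y => (starRingEnd ℂ) (φ (-y)))
        (ContinuousLinearMap.mul ℂ ℂ) μ x

theorem main_aux {G : Type*}
    [AddCommGroup G] [TopologicalSpace G] [IsTopologicalAddGroup G]
    [LocallyCompactSpace G] [SecondCountableTopology G] [T2Space G]
    [MeasurableSpace G] [BorelSpace G]
    (μ : Measure G) [μ.IsAddHaarMeasure]
    (D : Set G) (hDclosed : IsClosed D) (hDdiscrete : DiscreteTopology D)
    (c : G → ℂ) (hc : ∀ x ∉ D, c x = 0)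
    (hpd : DiracCombIsPositiveDefinite μ c) :
    IsPositiveDefiniteOn c Set.univ := by
  intro n x _ c'
  classical
  -- isolated neighborhoods
  have hiso : ∀ g : G, ∃ U ∈ nhds g, U ∩ D ⊆ {g} := by
    intro g
    by_cases hg : g ∈ D
    · have h1 : {g} ∈ nhdsWithin g D := singleton_mem_nhdsWithin_of_mem_discrete (isDiscrete_iff_discreteTopology.mpr hDdiscrete) hg
      rw [mem_nhdsWithin] at h1
      obtain ⟨U, hUo, hgU, hUD⟩ := h1
      exact ⟨U, hUo.mem_nhds hgU, hUD⟩
    · exact ⟨Dᶜ, hDclosed.isOpen_compl.mem_nhds hg, fun y hy => absurd hy.2 hy.1⟩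
  choose U hU hUD using hiso
  set d : Fin n × Fin n → G := fun p => x p.1 - x p.2 with hd
  set W : Set G := ⋂ p : Fin n × Fin n, (fun z => d p + z) ⁻¹' (U (d p)) with hWdef
  have hWnhds : W ∈ nhds (0 : G) := by
    refine Filter.iInter_mem.2 fun p => ?_
    exact (continuous_const.add continuous_id).continuousAt.preimage_mem_nhds
      (by simpa using hU (d p))
  obtain ⟨V, hVnhds, hVsub⟩ := exists_nhds_half_neg hWnhds
  obtain ⟨V', hV'sub, hV'open, hV'mem⟩ := mem_nhds_iff.1 hVnhds
  -- bump function
  obtain ⟨ψ, hψ1, hψ0, hψsupp, hψmem⟩ :=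
    exists_continuous_one_zero_of_isCompact (isCompact_singleton (x := (0 : G)))
      hV'open.isClosed_compl (by simp [Set.disjoint_left, hV'mem])
  have hψsuppV : Function.support ψ ⊆ V' := fun t ht => by
    by_contra hne; exact ht (hψ0 hne)
  -- the autocorrelation function
  set h : G → ℂ := fun s => ∫ t, (ψ t : ℂ) * (ψ (t - s) : ℂ) ∂μ with hhdef
  have hψc : Continuous fun t : G => (ψ t : ℂ) := Complex.continuous_ofReal.comp ψ.continuous
  have hψcs : HasCompactSupport fun t : G => (ψ t : ℂ) :=
    hψsupp.comp_left (g := fun r : ℝ => (r : ℂ)) (by simp)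
  have hh_supp : ∀ s : G, s ∉ W → h s = 0 := by
    intro s hs
    have hz : ∀ t : G, (ψ t : ℂ) * (ψ (t - s) : ℂ) = 0 := by
      intro t
      by_contra hne
      have h1 : ψ t ≠ 0 := fun e => hne (by simp [e])
      have h2 : ψ (t - s) ≠ 0 := fun e => hne (by simp [e])
      have hw : t - (t - s) ∈ W := hVsub t (hV'sub (hψsuppV h1)) (t - s) (hV'sub (hψsuppV h2))
      apply hs
      simpa using hw
    simp only [hhdef, hz, integral_zero]
  -- the test function
  set φ : G → ℂ := fun t => ∑ k, c' k * (ψ (t - x k) : ℂ) with hφdef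
  have hterm_cont : ∀ a : G, Continuous fun t : G => (ψ (t - a) : ℂ) := fun a =>
    hψc.comp (continuous_id.sub continuous_const)
  have hterm_cs : ∀ a : G, HasCompactSupport fun t : G => (ψ (t - a) : ℂ) := fun a =>
    hψcs.comp_homeomorph (Homeomorph.subRight a)
  have hφcont : Continuous φ :=
    continuous_finset_sum _ fun k _ => continuous_const.mul (hterm_cont (x k))
  have hφcs : HasCompactSupport φ := by
    have : ∀ k : Fin n, HasCompactSupport fun t : G => c' k * (ψ (t - x k) : ℂ) := fun k =>
      HasCompactSupport.mul_left (hterm_cs (x k))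
    apply HasCompactSupport.intro (isCompact_iUnion fun k : Fin n => this k)
    intro t ht
    simp only [Set.mem_iUnion, not_exists] at ht
    refine Finset.sum_eq_zero fun k _ => ?_
    have := image_eq_zero_of_notMem_tsupport (ht k)
    simpa using this
  -- per-pair integrability
  have hint : ∀ a b : G, Integrable (fun t : G => (ψ (t - a) : ℂ) * (ψ (t - b) : ℂ)) μ := by
    intro a b
    exact ((hterm_cont a).mul (hterm_cont b)).integrable_of_hasCompactSupport
      ((hterm_cs a).mul_right)
  -- translation identity
  have hkey : ∀ a b : G, (∫ t, (ψ (t - a) : ℂ) * (ψ (t - b) : ℂ) ∂μ) = h (b - a) := by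
    intro a b
    have := integral_add_right_eq_self (μ := μ)
      (fun t : G => (ψ (t - a) : ℂ) * (ψ (t - b) : ℂ)) a
    rw [← this, hhdef]
    congr 1
    ext t
    have e1 : t + a - a = t := by abel
    have e2 : t + a - b = t - (b - a) := by abel
    rw [e1, e2]
  -- convolution expansion
  have hconv : ∀ y : G,
      MeasureTheory.convolution φ (fun z => (starRingEnd ℂ) (φ (-z)))
        (ContinuousLinearMap.mul ℂ ℂ) μ y
      = ∑ p : Fin n × Fin n, c' p.1 * (starRingEnd ℂ) (c' p.2) * h (y - d p) := by
    intro y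
    rw [MeasureTheory.convolution_def]
    have integrand : ∀ t : G,
        (ContinuousLinearMap.mul ℂ ℂ) (φ t) ((starRingEnd ℂ) (φ (-(y - t))))
        = ∑ p : Fin n × Fin n, c' p.1 * (starRingEnd ℂ) (c' p.2) *
            ((ψ (t - x p.1) : ℂ) * (ψ (t - (y + x p.2)) : ℂ)) := by
      intro t
      have lhs : (ContinuousLinearMap.mul ℂ ℂ) (φ t) ((starRingEnd ℂ) (φ (-(y - t))))
          = φ t * (starRingEnd ℂ) (φ (t - y)) := by rw [neg_sub]; rfl
      rw [lhs, Fintype.sum_prod_type]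
      simp only [hφdef, map_sum, map_mul, Complex.conj_ofReal]
      rw [Fintype.sum_mul_sum]
      refine Finset.sum_congr rfl fun k _ => Finset.sum_congr rfl fun l _ => ?_
      have : t - y - x l = t - (y + x l) := by abel
      rw [this]
      ring
    rw [MeasureTheory.integral_congr_ae (Filter.Eventually.of_forall integrand)]
    rw [integral_finset_sum _ fun p _ => ((hint (x p.1) (y + x p.2)).const_mul _)]
    refine Finset.sum_congr rfl fun p _ => ?_
    rw [integral_const_mul, hkey]
    have : y + x p.2 - x p.1 = y - d p := by simp only [hd]; abel
    rw [this]
  -- positivity from hpd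
  have hpos := hpd φ hφcont hφcs
  -- rewrite the tsum
  have hFsupp : ∀ p : Fin n × Fin n, ∀ z : G, z ≠ d p →
      c z * (c' p.1 * (starRingEnd ℂ) (c' p.2) * h (z - d p)) = 0 := by
    intro p z hz
    by_cases hcz : c z = 0
    · simp [hcz]
    · have hzD : z ∈ D := by by_contra hzD; exact hcz (hc z hzD)
      have : h (z - d p) = 0 := by
        apply hh_supp
        intro hw
        apply hz
        have : z - d p ∈ (fun w => d p + w) ⁻¹' (U (d p)) := by
          rw [hWdef] at hw
          exact Set.mem_iInter.1 hw p
        have hzU : z ∈ U (d p) := by simpa using this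
        exact hUD (d p) ⟨hzU, hzD⟩
      simp [this]
  have hsummable : ∀ p : Fin n × Fin n,
      Summable fun z : G => c z * (c' p.1 * (starRingEnd ℂ) (c' p.2) * h (z - d p)) := by
    intro p
    apply summable_of_ne_finset_zero (s := {d p})
    intro z hz
    exact hFsupp p z (by simpa using hz)
  have htsum : (∑' z : G, c z *
      MeasureTheory.convolution φ (fun w => (starRingEnd ℂ) (φ (-w)))
        (ContinuousLinearMap.mul ℂ ℂ) μ z)
      = ∑ p : Fin n × Fin n, c (d p) * (c' p.1 * (starRingEnd ℂ) (c' p.2) * h 0) := by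
    calc (∑' z : G, c z *
        MeasureTheory.convolution φ (fun w => (starRingEnd ℂ) (φ (-w)))
          (ContinuousLinearMap.mul ℂ ℂ) μ z)
        = ∑' z : G, ∑ p : Fin n × Fin n,
            c z * (c' p.1 * (starRingEnd ℂ) (c' p.2) * h (z - d p)) := by
          refine tsum_congr fun z => ?_
          rw [hconv z, Finset.mul_sum]
      _ = ∑ p : Fin n × Fin n, ∑' z : G,
            c z * (c' p.1 * (starRingEnd ℂ) (c' p.2) * h (z - d p)) :=
          Summable.tsum_finsetSum fun p _ => hsummable p
      _ = ∑ p : Fin n × Fin n, c (d p) * (c' p.1 * (starRingEnd ℂ) (c' p.2) * h 0) := by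
          refine Finset.sum_congr rfl fun p _ => ?_
          rw [tsum_eq_single (d p) (hFsupp p)]
          simp
  rw [htsum] at hpos
  -- positivity of h 0
  set r : ℝ := ∫ t, ψ t * ψ t ∂μ with hrdef
  have hh0 : h 0 = (r : ℂ) := by
    rw [hhdef, hrdef]
    simp only [sub_zero, ← Complex.ofReal_mul]
    exact integral_ofReal
  have hrpos : 0 < r := by
    rw [hrdef]
    rw [integral_pos_iff_support_of_nonneg_ae]
    · have hopen : IsOpen (Function.support ψ) := by
        rw [Function.support_eq_preimage]
        exact IsOpen.preimage ψ.continuous (isOpen_compl_singleton)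
      have : Function.support (fun t : G => ψ t * ψ t) = Function.support ψ := by
        ext t; simp [Function.mem_support, mul_self_eq_zero]
      rw [this]
      refine hopen.measure_pos μ ⟨0, ?_⟩
      simp [Function.mem_support, hψ1 rfl]
    · exact Filter.Eventually.of_forall fun t => mul_self_nonneg _
    · exact (ψ.continuous.mul ψ.continuous).integrable_of_hasCompactSupport
        (hψsupp.mul_right)
  -- conclude
  have hT : (0 : ℂ) ≤ (r : ℂ) * ∑ k, ∑ l, c' k * (starRingEnd ℂ) (c' l) * c (x k - x l) := by
    have : (∑ p : Fin n × Fin n, c (d p) * (c' p.1 * (starRingEnd ℂ) (c' p.2) * h 0))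
        = (r : ℂ) * ∑ k, ∑ l, c' k * (starRingEnd ℂ) (c' l) * c (x k - x l) := by
      rw [Fintype.sum_prod_type]
      simp_rw [Finset.mul_sum]
      refine Finset.sum_congr rfl fun k _ => Finset.sum_congr rfl fun l _ => ?_
      rw [hh0]
      simp only [hd]
      ring
    rwa [this] at hpos
  have hrne : (r : ℂ) ≠ 0 := by exact_mod_cast hrpos.ne'
  have := mul_nonneg (Complex.zero_le_real.2 (inv_nonneg.2 hrpos.le)) hT
  rw [← mul_assoc] at this
  rw [show ((r⁻¹ : ℝ) : ℂ) * (r : ℂ) = 1 by push_cast; field_simp] at this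
  simpa using this

theorem posDef_on_subgroup_of_diracComb_posDef {G : Type*}
    [AddCommGroup G] [TopologicalSpace G] [IsTopologicalAddGroup G]
    [LocallyCompactSpace G] [SecondCountableTopology G] [T2Space G]
    [MeasurableSpace G] [BorelSpace G]
    (μ : Measure G) [μ.IsAddHaarMeasure]
    (D : Set G) (hDclosed : IsClosed D) (hDdiscrete : DiscreteTopology D)
    (c : G → ℂ) (hc : ∀ x ∉ D, c x = 0)
    (hpd : DiracCombIsPositiveDefinite μ c) :
    (∀ L : AddSubgroup G, IsPositiveDefiniteOn c (L : Set G)) ∧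
      IsPositiveDefiniteOn c Set.univ := by
  have huniv := main_aux μ D hDclosed hDdiscrete c hc hpd
  exact ⟨fun L n x _ c' => huniv n x (fun k => Set.mem_univ _) c', huniv⟩
end

section
/- Let (G, H, 𝓛) be a cut-and-project scheme, let W ⊆ H be a compact set, and let f : G → ℂ be a function which vanishes outside Λ(W). Define j : G × H → ℂ by j(x, y) := f(x) if (x, y) ∈ 𝓛, and j(x, y) := 0 otherwise. Then f is a positive definite function on G if and only if j is a positive definite function on G × H. -/
open scoped ComplexOrder

/-- A cut-and-project scheme: two LCA (locally compact, second-countable, Hausdorff)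
abelian groups `G`, `H` together with a discrete cocompact subgroup `𝓛` of `G × H`
whose projection to `H` is dense and whose projection to `G` is injective. -/
structure CutAndProjectScheme (G H : Type*)
    [AddCommGroup G] [TopologicalSpace G] [IsTopologicalAddGroup G]
    [LocallyCompactSpace G] [SecondCountableTopology G] [T2Space G]
    [AddCommGroup H] [TopologicalSpace H] [IsTopologicalAddGroup H]
    [LocallyCompactSpace H] [SecondCountableTopology H] [T2Space H] where
  lattice : AddSubgroup (G × H)
  discrete : DiscreteTopology lattice
  cocompact : CompactSpace ((G × H) ⧸ lattice)
  denseProjH : DenseRange fun p : lattice => (p : G × H).2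
  injProjG : Function.Injective fun p : lattice => (p : G × H).1

/-- Choose a representative map for an equivalence relation on `Fin n`. -/
private lemma exists_rep {n : ℕ} (r : Fin n → Fin n → Prop) (hr : Equivalence r) :
    ∃ rep : Fin n → Fin n, (∀ k, r k (rep k)) ∧ (∀ k l, rep k = rep l ↔ r k l) := by
  classical
  set rep : Fin n → Fin n := fun k =>
    (Finset.univ.filter (fun l => r k l)).min' ⟨k, by simp [hr.refl k]⟩ with hrepdef
  have hmem : ∀ k, r k (rep k) := by
    intro k
    have h := Finset.min'_mem (Finset.univ.filter (fun l => r k l)) ⟨k, by simp [hr.refl k]⟩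
    simpa using h
  refine ⟨rep, hmem, fun k l => ⟨fun h => ?_, fun h => ?_⟩⟩
  · have hl : r l (rep k) := by rw [h]; exact hmem l
    exact hr.trans (hmem k) (hr.symm hl)
  · have hset : Finset.univ.filter (fun m => r k m) = Finset.univ.filter (fun m => r l m) := by
      ext m
      simp only [Finset.mem_filter, Finset.mem_univ, true_and]
      exact ⟨fun hk => hr.trans (hr.symm h) hk, fun hl => hr.trans h hl⟩
    refine le_antisymm ?_ ?_
    · exact Finset.min'_le _ _ (by rw [hset]; exact Finset.min'_mem _ _)
    · exact Finset.min'_le _ _ (by rw [← hset]; exact Finset.min'_mem _ _)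

/-- Decompose a doubly-indexed sum over "blocks" determined by a representative map. -/
private lemma key_sum {n : ℕ} (a : Fin n → Fin n → ℂ) (rep : Fin n → Fin n)
    (h0 : ∀ k l, rep k ≠ rep l → a k l = 0)
    (hpos : ∀ t, 0 ≤ ∑ k, ∑ l, (if rep k = t ∧ rep l = t then a k l else 0)) :
    0 ≤ ∑ k, ∑ l, a k l := by
  classical
  have hpt : ∀ k l, a k l = ∑ t, (if rep k = t ∧ rep l = t then a k l else 0) := by
    intro k l
    by_cases h : rep l = rep k
    · rw [Finset.sum_eq_single (rep k)]
      · simp [h]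
      · intro t _ ht
        exact if_neg (fun hc => ht hc.1.symm)
      · simp
    · have ha : a k l = 0 := h0 k l (fun hh => h hh.symm)
      have : ∀ t, (if rep k = t ∧ rep l = t then a k l else 0) = 0 := by
        intro t
        split
        · exact ha
        · rfl
      simp [ha, this]
  calc (0 : ℂ) ≤ ∑ t, ∑ k, ∑ l, (if rep k = t ∧ rep l = t then a k l else 0) :=
        Finset.sum_nonneg fun t _ => hpos t
    _ = ∑ k, ∑ t, ∑ l, (if rep k = t ∧ rep l = t then a k l else 0) := Finset.sum_comm
    _ = ∑ k, ∑ l, ∑ t, (if rep k = t ∧ rep l = t then a k l else 0) :=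
        Finset.sum_congr rfl fun k _ => Finset.sum_comm
    _ = ∑ k, ∑ l, a k l := by
        refine Finset.sum_congr rfl fun k _ => Finset.sum_congr rfl fun l _ => ?_
        exact (hpt k l).symm

theorem lift_posDef_function_iff {G H : Type*}
    [AddCommGroup G] [TopologicalSpace G] [IsTopologicalAddGroup G]
    [LocallyCompactSpace G] [SecondCountableTopology G] [T2Space G]
    [AddCommGroup H] [TopologicalSpace H] [IsTopologicalAddGroup H]
    [LocallyCompactSpace H] [SecondCountableTopology H] [T2Space H]
    (S : CutAndProjectScheme G H) (W : Set H) (hW : IsCompact W)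
    (f : G → ℂ)
    (hf : ∀ x : G, x ∉ {x : G | ∃ y ∈ W, (x, y) ∈ S.lattice} → f x = 0) :
    IsPositiveDefiniteOn f Set.univ ↔
      IsPositiveDefiniteOn
        (Set.indicator (S.lattice : Set (G × H)) (fun p => f p.1)) Set.univ := by
  classical
  constructor
  · -- f pos def → lifted function pos def
    intro hpd n z _ c
    set r : Fin n → Fin n → Prop := fun k l => z k - z l ∈ S.lattice with hrdef
    have hre : Equivalence r := by
      constructor
      · intro k; simp only [hrdef, sub_self]; exact S.lattice.zero_mem
      · intro k l h
        have := S.lattice.neg_mem h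
        simpa [hrdef, neg_sub] using this
      · intro k l m h1 h2
        have := S.lattice.add_mem h1 h2
        simpa [hrdef, sub_add_sub_cancel] using this
    obtain ⟨rep, hmem, hrep⟩ := exists_rep r hre
    refine key_sum _ rep ?_ ?_
    · intro k l hne
      have hnr : ¬ r k l := fun h => hne ((hrep k l).mpr h)
      rw [Set.indicator_of_notMem hnr, mul_zero]
    · intro t
      have := hpd n (fun k => (z k).1) (fun _ => Set.mem_univ _)
        (fun k => if rep k = t then c k else 0)
      refine le_of_le_of_eq this ?_
      refine Finset.sum_congr rfl fun k _ => Finset.sum_congr rfl fun l _ => ?_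
      by_cases hk : rep k = t
      · by_cases hl : rep l = t
        · have hrkl : r k l := (hrep k l).mp (hk.trans hl.symm)
          have hind : Set.indicator (S.lattice : Set (G × H)) (fun p => f p.1) (z k - z l)
              = f ((z k).1 - (z l).1) := by
            rw [Set.indicator_of_mem hrkl]
            simp
          rw [if_pos hk, if_pos hl, if_pos ⟨hk, hl⟩, hind]
        · simp [hk, hl]
      · simp [hk]
  · -- lifted function pos def → f pos def
    intro hpd n x _ c
    set r : Fin n → Fin n → Prop := fun k l => ∃ w : H, (x k - x l, w) ∈ S.lattice with hrdef
    have hre : Equivalence r := by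
      constructor
      · intro k
        refine ⟨0, ?_⟩
        simp only [sub_self]
        exact S.lattice.zero_mem
      · rintro k l ⟨w, hw⟩
        refine ⟨-w, ?_⟩
        have := S.lattice.neg_mem hw
        simpa [neg_sub, Prod.neg_mk] using this
      · rintro k l m ⟨w1, h1⟩ ⟨w2, h2⟩
        refine ⟨w1 + w2, ?_⟩
        have := S.lattice.add_mem h1 h2
        simpa [sub_add_sub_cancel, Prod.mk_add_mk] using this
    obtain ⟨rep, hmem, hrep⟩ := exists_rep r hre
    -- choose a second coordinate for each point
    have hex : ∀ k, ∃ w : H, (x k - x (rep k), w) ∈ S.lattice := hmem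
    set y : Fin n → H := fun k => Classical.choose (hex k) with hydef
    have hy : ∀ k, (x k - x (rep k), y k) ∈ S.lattice := fun k => Classical.choose_spec (hex k)
    refine key_sum _ rep ?_ ?_
    · intro k l hne
      have hnr : ¬ r k l := fun h => hne ((hrep k l).mpr h)
      have hfz : f (x k - x l) = 0 := by
        refine hf _ ?_
        rintro ⟨w, -, hw⟩
        exact hnr ⟨w, hw⟩
      rw [hfz, mul_zero]
    · intro t
      have := hpd n (fun k => (x k, y k)) (fun _ => Set.mem_univ _)
        (fun k => if rep k = t then c k else 0)
      refine le_of_le_of_eq this ?_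
      refine Finset.sum_congr rfl fun k _ => Finset.sum_congr rfl fun l _ => ?_
      by_cases hk : rep k = t
      · by_cases hl : rep l = t
        · have hrl : rep k = rep l := hk.trans hl.symm
          have hmemkl : ((x k, y k) - (x l, y l) : G × H) ∈ S.lattice := by
            have hsub := S.lattice.sub_mem (hy k) (hy l)
            have heq : ((x k - x (rep k), y k) - (x l - x (rep l), y l) : G × H)
                = (x k, y k) - (x l, y l) := by
              rw [hrl]
              simp [Prod.ext_iff, sub_sub_sub_cancel_right]
            rwa [heq] at hsub
          have hind : Set.indicator (S.lattice : Set (G × H)) (fun p => f p.1)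
              ((x k, y k) - (x l, y l)) = f (x k - x l) := by
            rw [Set.indicator_of_mem hmemkl]
            simp
          rw [if_pos hk, if_pos hl, hind, if_pos ⟨hk, hl⟩]
        · simp [hk, hl]
      · simp [hk]
end

section
/- Let G be a locally compact, second-countable, Hausdorff abelian topological group with a Haar measure, let Λ ⊆ G be a closed, uniformly discrete set, and let c : G → ℂ be a bounded function vanishing outside Λ. Then c is a positive definite function on G if and only if the weighted Dirac comb with weight function c is a positive definite measure. -/
open MeasureTheory
open scoped ComplexOrder

/-- A set `Λ` in a topological additive group is uniformly discrete if there is an open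
neighbourhood `U` of `0` such that every translate `t + U` contains at most one point of `Λ`. -/
def UniformlyDiscrete {G : Type*} [AddCommGroup G] [TopologicalSpace G] (Λ : Set G) : Prop :=
  ∃ U : Set G, IsOpen U ∧ (0 : G) ∈ U ∧ ∀ t : G, (Λ ∩ ((t + ·) '' U)).Subsingleton

set_option maxHeartbeats 1000000


/-- `f` is positive definite on the subset `S` of an additive abelian group. -/
private lemma pd_apply_neg {G : Type*} [AddCommGroup G] {f : G → ℂ}
    (hf : IsPositiveDefiniteOn f Set.univ) (v : G) : f (-v) = (starRingEnd ℂ) (f v) := by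
  have h0 := hf 1 ![0] (fun _ => Set.mem_univ _) ![1]
  have h1 := hf 2 ![0, v] (fun _ => Set.mem_univ _) ![1, 1]
  have h2 := hf 2 ![0, v] (fun _ => Set.mem_univ _) ![1, Complex.I]
  simp [Fin.sum_univ_two, Fin.sum_univ_one, Complex.ext_iff] at h0 h1 h2
  rw [Complex.le_def] at h0 h1 h2
  simp [Complex.ext_iff] at h0 h1 h2 ⊢
  constructor
  · nlinarith [h1.2, h2.2, h0.2]
  · nlinarith [h1.2, h2.2, h0.2]

private lemma count_pairs {G : Type*} [AddCommGroup G] [DecidableEq G] {I : Type*} [Fintype I]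
    (x : I → G) (P Q : I → Prop) [DecidablePred P] [DecidablePred Q] (t : G) (B : Finset G)
    (hB : ∀ k, x k ∈ B) :
    (Finset.univ.filter fun p : I × I => (P p.1 ∧ Q p.2) ∧ x p.1 - x p.2 = t).card
      = ∑ a ∈ B, (Finset.univ.filter fun k => P k ∧ x k = a).card
          * (Finset.univ.filter fun k => Q k ∧ x k = a - t).card := by
  classical
  rw [Finset.card_eq_sum_card_fiberwise (f := fun p : I × I => x p.1) (t := B)
      (fun p _ => hB p.1)]
  refine Finset.sum_congr rfl fun a _ => ?_
  have he : (Finset.univ.filter fun p : I × I => ((P p.1 ∧ Q p.2) ∧ x p.1 - x p.2 = t) ∧ x p.1 = a)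
      = (Finset.univ.filter fun k => P k ∧ x k = a) ×ˢ
        (Finset.univ.filter fun l => Q l ∧ x l = a - t) := by
    ext p
    simp only [Finset.mem_filter, Finset.mem_product, Finset.mem_univ, true_and]
    constructor
    · rintro ⟨⟨⟨hP, hQ⟩, hxy⟩, hxa⟩
      refine ⟨⟨hP, hxa⟩, hQ, ?_⟩
      rw [← hxa, ← hxy]; abel
    · rintro ⟨⟨hP, hxa⟩, hQ, hxb⟩
      refine ⟨⟨⟨hP, hQ⟩, ?_⟩, hxa⟩
      rw [hxa, hxb]; abel
  rw [Finset.filter_filter, he, Finset.card_product]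

private lemma sum_shift {G : Type*} [AddCommGroup G] [DecidableEq G] (F : G → ℝ)
    (A B : Finset G) (hF : ∀ a ∉ A, F a = 0) (t : G) (ht : A.image (· + t) ⊆ B) :
    ∑ a ∈ B, F (a - t) = ∑ a ∈ A, F a := by
  have h1 : ∑ a ∈ B, F (a - t) = ∑ a ∈ A.image (· + t), F (a - t) := by
    refine (Finset.sum_subset ht fun a _ ha => ?_).symm
    by_contra hne
    exact ha (Finset.mem_image.2 ⟨a - t, by
      constructor
      · by_contra h'; exact hne (hF _ h')
      · simp⟩)
  rw [h1, Finset.sum_image (fun a _ b _ h => by simpa using h)]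
  simp


private lemma x_update {G : Type*} [AddCommGroup G] {m N : ℕ}
    (e : Fin m → G) (k : Fin m → Fin N) (j : Fin m) (v : Fin N) :
    ∑ i, ((Function.update k j v i : ℕ)) • e i
      = (∑ i, (k i : ℕ) • e i) - (k j : ℕ) • e j + (v : ℕ) • e j := by
  classical
  have h1 : ∑ i, ((Function.update k j v i : ℕ)) • e i
      = (∑ i ∈ Finset.univ \ {j}, ((Function.update k j v i : ℕ)) • e i) + (v : ℕ) • e j := by
    rw [Finset.sum_eq_sum_sdiff_singleton_add (Finset.mem_univ j)]
    simp
  have h2 : ∑ i ∈ Finset.univ \ {j}, ((Function.update k j v i : ℕ)) • e i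
      = ∑ i ∈ Finset.univ \ {j}, (k i : ℕ) • e i := by
    refine Finset.sum_congr rfl fun i hi => ?_
    have : i ≠ j := by simpa using (Finset.mem_sdiff.1 hi).2
    rw [Function.update_of_ne this]
  have h3 : ∑ i, (k i : ℕ) • e i
      = (∑ i ∈ Finset.univ \ {j}, (k i : ℕ) • e i) + (k j : ℕ) • e j := by
    rw [Finset.sum_eq_sum_sdiff_singleton_add (Finset.mem_univ j)]
  rw [h1, h2, h3]
  abel

private lemma M_eq_sum_R {G : Type*} [AddCommGroup G] [DecidableEq G] {m N : ℕ} (hN : 0 < N)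
    (e : Fin m → G) (x : (Fin m → Fin N) → G) (hx : ∀ k, x k = ∑ i, (k i : ℕ) • e i)
    (j : Fin m) (a : G) :
    (Finset.univ.filter fun k : Fin m → Fin N => x k = a).card
      = ∑ r : Fin N, (Finset.univ.filter
          fun k : Fin m → Fin N => (k j : ℕ) = 0 ∧ x k = a - (r : ℕ) • e j).card := by
  classical
  rw [Finset.card_eq_sum_card_fiberwise (f := fun k : Fin m → Fin N => k j)
    (t := Finset.univ) (fun k _ => Finset.mem_univ _)]
  refine Finset.sum_congr rfl fun r _ => ?_
  rw [Finset.filter_filter]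
  refine Finset.card_bij' (fun k _ => Function.update k j ⟨0, hN⟩)
    (fun k _ => Function.update k j r) ?_ ?_ ?_ ?_
  · intro k hk
    simp only [Finset.mem_filter, Finset.mem_univ, true_and] at hk ⊢
    obtain ⟨hxa, hkj⟩ := hk
    constructor
    · simp
    · rw [hx, x_update, ← hx k, hxa, hkj]
      simp
  · intro k hk
    simp only [Finset.mem_filter, Finset.mem_univ, true_and] at hk ⊢
    obtain ⟨hkj, hxa⟩ := hk
    constructor
    · rw [hx, x_update, ← hx k, hxa]
      have : (k j : ℕ) • e j = 0 := by rw [hkj, zero_smul]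
      rw [this, sub_zero]
      abel
    · simp
  · intro k hk
    simp only [Finset.mem_filter, Finset.mem_univ, true_and] at hk
    show Function.update (Function.update k j ⟨0, hN⟩) j r = k
    rw [Function.update_idem, ← hk.2, Function.update_eq_self]
  · intro k hk
    simp only [Finset.mem_filter, Finset.mem_univ, true_and] at hk
    show Function.update (Function.update k j r) j ⟨0, hN⟩ = k
    rw [Function.update_idem]
    have : (⟨0, hN⟩ : Fin N) = k j := by
      ext
      simpa using hk.1.symm
    rw [this, Function.update_eq_self]


private lemma group_lemma {G : Type*} [AddCommGroup G] [DecidableEq G] (f : G → ℂ)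
    {I : Type*} [Fintype I] [DecidableEq I] (x : I → G) (T : Finset G)
    (hT0 : ∀ s ∉ T, f s = 0) :
    (∑ k : I, ∑ l : I, f (x k - x l))
      = ∑ s ∈ T, ((Finset.univ.filter fun p : I × I => x p.1 - x p.2 = s).card : ℂ) * f s := by
  classical
  have h1 : (∑ k : I, ∑ l : I, f (x k - x l))
      = ∑ p : I × I, f (x p.1 - x p.2) :=
    (Fintype.sum_prod_type (f := fun p : I × I => f (x p.1 - x p.2))).symm
  rw [h1, Finset.sum_comp (fun t => f t) (fun p : I × I => x p.1 - x p.2)]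
  set V := Finset.univ.image (fun p : I × I => x p.1 - x p.2) with hV
  have h3 : ∑ b ∈ V, (Finset.univ.filter (fun p : I × I => x p.1 - x p.2 = b)).card • f b
      = ∑ b ∈ V ∩ T, (Finset.univ.filter (fun p : I × I => x p.1 - x p.2 = b)).card • f b := by
    refine (Finset.sum_subset Finset.inter_subset_left (fun b hb hbn => ?_)).symm
    have hbT : b ∉ T := fun hbT => hbn (Finset.mem_inter.2 ⟨hb, hbT⟩)
    rw [hT0 b hbT, smul_zero]
  have h4 : ∑ b ∈ V ∩ T, (Finset.univ.filter (fun p : I × I => x p.1 - x p.2 = b)).card • f b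
      = ∑ b ∈ T, (Finset.univ.filter (fun p : I × I => x p.1 - x p.2 = b)).card • f b := by
    refine Finset.sum_subset Finset.inter_subset_right (fun b hb hbn => ?_)
    have hbV : b ∉ V := fun hv => hbn (Finset.mem_inter.2 ⟨hv, hb⟩)
    have hzero : (Finset.univ.filter (fun p : I × I => x p.1 - x p.2 = b)).card = 0 := by
      rw [Finset.card_eq_zero, Finset.filter_eq_empty_iff]
      intro p _ hp
      exact hbV (Finset.mem_image.2 ⟨p, Finset.mem_univ _, hp⟩)
    rw [hzero, zero_smul]
  rw [h3, h4]
  exact Finset.sum_congr rfl fun s _ => by simp [nsmul_eq_mul]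


private lemma key_bound2 {G : Type*} [AddCommGroup G] [DecidableEq G] {N : ℕ} (hN : 0 < N)
    (s : G) (Mn Rn : G → ℕ) (A : Finset G)
    (hMsupp : ∀ a ∉ A, Mn a = 0) (hRM : ∀ a, Rn a ≤ Mn a)
    (hMR : ∀ a, Mn a = ∑ r ∈ Finset.range N, Rn (a - r • s)) :
    (∑ a ∈ (Finset.range (N+1)).biUnion (fun r => A.image (· + r • s)), (Mn a : ℝ) * Mn (a - s))
        ≤ ∑ a ∈ (Finset.range (N+1)).biUnion (fun r => A.image (· + r • s)), (Mn a : ℝ) * Mn a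
    ∧ (N : ℝ) * ((∑ a ∈ (Finset.range (N+1)).biUnion (fun r => A.image (· + r • s)), (Mn a : ℝ) * Mn a)
          - ∑ a ∈ (Finset.range (N+1)).biUnion (fun r => A.image (· + r • s)), (Mn a : ℝ) * Mn (a - s))
        ≤ ∑ a ∈ (Finset.range (N+1)).biUnion (fun r => A.image (· + r • s)), (Mn a : ℝ) * Mn a := by
  classical
  set B : Finset G := (Finset.range (N+1)).biUnion (fun r => A.image (· + r • s)) with hBdef
  have hasub : ∀ r : ℕ, r ≤ N → A.image (· + r • s) ⊆ B := by
    intro r hr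
    rw [hBdef]
    exact Finset.subset_biUnion_of_mem (fun r : ℕ => A.image (· + r • s)) (x := r)
      (Finset.mem_range.2 (by omega))
  have hAB : A ⊆ B := by
    intro a ha
    have h0 : a ∈ A.image (· + (0:ℕ) • s) := Finset.mem_image.2 ⟨a, ha, by simp⟩
    exact hasub 0 (by omega) h0
  have hRsupp : ∀ a ∉ A, Rn a = 0 := fun a ha => Nat.le_zero.1 ((hMsupp a ha) ▸ hRM a)
  have hBA : ∀ F : G → ℝ, (∀ a ∉ A, F a = 0) → ∑ a ∈ B, F a = ∑ a ∈ A, F a :=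
    fun F hF => (Finset.sum_subset hAB fun a _ ha => hF a ha).symm
  have hshift : ∀ (F : G → ℝ), (∀ a ∉ A, F a = 0) → ∀ r : ℕ, r ≤ N →
      ∑ a ∈ B, F (a - r • s) = ∑ a ∈ B, F a := by
    intro F hF r hr
    rw [sum_shift F A B hF (r • s) (hasub r hr), hBA F hF]
  have hMsuppR : ∀ a ∉ A, (fun b => (Mn b : ℝ) * Mn b) a = 0 := by
    intro a ha; simp [hMsupp a ha]
  have hRsuppR : ∀ a ∉ A, (fun b => (Rn b : ℝ) * Rn b) a = 0 := by
    intro a ha; simp [hRsupp a ha]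
  -- telescoping pointwise
  have htel : ∀ a : G, (Mn a : ℝ) - Mn (a - s) = (Rn a : ℝ) - Rn (a - N • s) := by
    intro a
    have h1 : (Mn a : ℝ) = ∑ r ∈ Finset.range N, (Rn (a - r • s) : ℝ) := by
      rw [hMR a]; push_cast; rfl
    have h2 : (Mn (a - s) : ℝ) = ∑ r ∈ Finset.range N, (Rn (a - (r+1) • s) : ℝ) := by
      rw [hMR (a - s)]
      push_cast
      refine Finset.sum_congr rfl fun r _ => ?_
      have harg : a - s - r • s = a - (r + 1) • s := by
        rw [succ_nsmul, sub_right_comm, sub_sub]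
      rw [harg]
    have e1 : ∑ r ∈ Finset.range (N+1), (Rn (a - r • s) : ℝ)
        = (∑ r ∈ Finset.range N, (Rn (a - (r+1) • s) : ℝ)) + (Rn (a - (0:ℕ) • s) : ℝ) :=
      Finset.sum_range_succ' (fun r => (Rn (a - r • s) : ℝ)) N
    have e2 : ∑ r ∈ Finset.range (N+1), (Rn (a - r • s) : ℝ)
        = (∑ r ∈ Finset.range N, (Rn (a - r • s) : ℝ)) + (Rn (a - N • s) : ℝ) :=
      Finset.sum_range_succ (fun r => (Rn (a - r • s) : ℝ)) N
    have e3 : a - (0:ℕ) • s = a := by simp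
    rw [e3] at e1
    rw [h1, h2]
    linarith [e1, e2]
  -- shifted square sums
  have hM2shift : ∑ a ∈ B, (Mn (a - s) : ℝ) * Mn (a - s) = ∑ a ∈ B, (Mn a : ℝ) * Mn a := by
    have := hshift (fun b => (Mn b : ℝ) * Mn b) hMsuppR 1 (by omega)
    simpa [one_nsmul] using this
  have hR2shift : ∑ a ∈ B, (Rn (a - N • s) : ℝ) * Rn (a - N • s) = ∑ a ∈ B, (Rn a : ℝ) * Rn a :=
    hshift (fun b => (Rn b : ℝ) * Rn b) hRsuppR N le_rfl
  -- expansion 1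
  have hsq1 : (0:ℝ) ≤ ∑ a ∈ B, ((Mn a : ℝ) - Mn (a - s))^2 :=
    Finset.sum_nonneg fun a _ => sq_nonneg _
  have hexp1 : ∑ a ∈ B, ((Mn a : ℝ) - Mn (a - s))^2
      = 2 * (∑ a ∈ B, (Mn a : ℝ) * Mn a) - 2 * (∑ a ∈ B, (Mn a : ℝ) * Mn (a - s)) := by
    have hpt : ∀ a ∈ B, ((Mn a : ℝ) - Mn (a - s))^2
        = ((Mn a : ℝ) * Mn a + (Mn (a-s) : ℝ) * Mn (a-s)) - 2 * ((Mn a : ℝ) * Mn (a - s)) :=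
      fun a _ => by ring
    rw [Finset.sum_congr rfl hpt, Finset.sum_sub_distrib, Finset.sum_add_distrib, hM2shift,
      ← Finset.mul_sum]
    ring
  have hcon1 : (∑ a ∈ B, (Mn a : ℝ) * Mn (a - s)) ≤ ∑ a ∈ B, (Mn a : ℝ) * Mn a := by
    linarith [hsq1, hexp1]
  -- expansion 2 : identify with R and bound by 2 ER
  have hexp2 : ∑ a ∈ B, ((Mn a : ℝ) - Mn (a - s))^2
      = ∑ a ∈ B, ((Rn a : ℝ) - Rn (a - N • s))^2 :=
    Finset.sum_congr rfl fun a _ => by rw [htel a]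
  have hexp3 : ∑ a ∈ B, ((Rn a : ℝ) - Rn (a - N • s))^2 ≤ 2 * ∑ a ∈ B, (Rn a : ℝ) * Rn a := by
    have hpt : ∀ a ∈ B, ((Rn a : ℝ) - Rn (a - N • s))^2
        ≤ (Rn a : ℝ) * Rn a + (Rn (a - N • s) : ℝ) * Rn (a - N • s) := by
      intro a _
      have hnn : (0:ℝ) ≤ (Rn a : ℝ) * Rn (a - N • s) := by positivity
      nlinarith
    calc ∑ a ∈ B, ((Rn a : ℝ) - Rn (a - N • s))^2
        ≤ ∑ a ∈ B, ((Rn a : ℝ) * Rn a + (Rn (a - N • s) : ℝ) * Rn (a - N • s)) :=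
          Finset.sum_le_sum hpt
      _ = 2 * ∑ a ∈ B, (Rn a : ℝ) * Rn a := by
          rw [Finset.sum_add_distrib, hR2shift]; ring
  -- N * ER ≤ D
  have hNER : (N : ℝ) * (∑ a ∈ B, (Rn a : ℝ) * Rn a) ≤ ∑ a ∈ B, (Mn a : ℝ) * Mn a := by
    have hsum_sq : ∀ a ∈ B, (∑ r ∈ Finset.range N, ((Rn (a - r • s) : ℝ))^2) ≤ (Mn a : ℝ) * Mn a := by
      intro a _
      have h1 : (Mn a : ℝ) = ∑ r ∈ Finset.range N, (Rn (a - r • s) : ℝ) := by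
        rw [hMR a]; push_cast; rfl
      have h2 := Finset.sum_sq_le_sq_sum_of_nonneg
        (f := fun r => (Rn (a - r • s) : ℝ)) (s := Finset.range N)
        (fun r _ => by positivity)
      calc (∑ r ∈ Finset.range N, ((Rn (a - r • s) : ℝ))^2)
          ≤ (∑ r ∈ Finset.range N, (Rn (a - r • s) : ℝ))^2 := h2
        _ = (Mn a : ℝ) * Mn a := by rw [← h1]; ring
    have h1 : ∑ a ∈ B, (∑ r ∈ Finset.range N, ((Rn (a - r • s) : ℝ))^2)
        ≤ ∑ a ∈ B, (Mn a : ℝ) * Mn a := Finset.sum_le_sum hsum_sq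
    have h2 : ∑ a ∈ B, (∑ r ∈ Finset.range N, ((Rn (a - r • s) : ℝ))^2)
        = ∑ r ∈ Finset.range N, ∑ a ∈ B, ((Rn (a - r • s) : ℝ))^2 := Finset.sum_comm
    have h3 : ∀ r ∈ Finset.range N, ∑ a ∈ B, ((Rn (a - r • s) : ℝ))^2
        = ∑ a ∈ B, ((Rn a : ℝ))^2 := by
      intro r hr
      have := hshift (fun b => ((Rn b : ℝ))^2)
        (fun a ha => by simp [hRsupp a ha]) r (le_of_lt (Finset.mem_range.1 hr))
      simpa using this
    have h4 : ∑ r ∈ Finset.range N, ∑ a ∈ B, ((Rn (a - r • s) : ℝ))^2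
        = (N : ℝ) * ∑ a ∈ B, ((Rn a : ℝ))^2 := by
      rw [Finset.sum_congr rfl h3, Finset.sum_const, Finset.card_range, nsmul_eq_mul]
    have h5 : ∑ a ∈ B, ((Rn a : ℝ))^2 = ∑ a ∈ B, (Rn a : ℝ) * Rn a :=
      Finset.sum_congr rfl fun a _ => by ring
    calc (N : ℝ) * (∑ a ∈ B, (Rn a : ℝ) * Rn a)
        = ∑ r ∈ Finset.range N, ∑ a ∈ B, ((Rn (a - r • s) : ℝ))^2 := by rw [h4, h5]
      _ = ∑ a ∈ B, (∑ r ∈ Finset.range N, ((Rn (a - r • s) : ℝ))^2) := h2.symm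
      _ ≤ ∑ a ∈ B, (Mn a : ℝ) * Mn a := h1
  refine ⟨hcon1, ?_⟩
  have hD0 : (0:ℝ) ≤ ∑ a ∈ B, (Mn a : ℝ) * Mn a :=
    Finset.sum_nonneg fun a _ => by positivity
  have hface : (∑ a ∈ B, (Mn a : ℝ) * Mn a) - (∑ a ∈ B, (Mn a : ℝ) * Mn (a - s))
      ≤ ∑ a ∈ B, (Rn a : ℝ) * Rn a := by
    linarith [hexp1, hexp2.symm ▸ hexp3]
  calc (N : ℝ) * ((∑ a ∈ B, (Mn a : ℝ) * Mn a) - ∑ a ∈ B, (Mn a : ℝ) * Mn (a - s))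
      ≤ (N : ℝ) * (∑ a ∈ B, (Rn a : ℝ) * Rn a) := by
        have hN0 : (0:ℝ) ≤ N := by positivity
        exact mul_le_mul_of_nonneg_left hface hN0
    _ ≤ ∑ a ∈ B, (Mn a : ℝ) * Mn a := hNER

private lemma count_pairs' {G : Type*} [AddCommGroup G] [DecidableEq G] {I : Type*} [Fintype I]
    (x : I → G) (t : G) (B : Finset G) (hB : ∀ k, x k ∈ B) :
    ((Finset.univ.filter fun p : I × I => x p.1 - x p.2 = t).card : ℝ)
      = ∑ a ∈ B, ((Finset.univ.filter fun k : I => x k = a).card : ℝ)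
          * ((Finset.univ.filter fun k : I => x k = a - t).card : ℝ) := by
  classical
  have h := count_pairs x (fun _ => True) (fun _ => True) t B hB
  simp only [true_and] at h
  rw [h]
  push_cast
  rfl


private lemma main_bound {G : Type*} [AddCommGroup G] [DecidableEq G] {f : G → ℂ}
    (hf : IsPositiveDefiniteOn f Set.univ) (T : Finset G) (hT0 : ∀ s ∉ T, f s = 0)
    {m : ℕ} (e : Fin m → G) (he : ∀ s ∈ T, ∃ j, e j = s)
    (N : ℕ) (hN : 0 < N) :
    -((∑ s ∈ T, ‖f s‖) / N) ≤ ∑ s ∈ T, (f s).re := by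
  classical
  set x : (Fin m → Fin N) → G := fun k => ∑ j, (k j : ℕ) • e j with hxdef
  have hxeq : ∀ k, x k = ∑ i, (k i : ℕ) • e i := fun k => rfl
  set Cnt : G → ℕ := fun t =>
    (Finset.univ.filter fun p : (Fin m → Fin N) × (Fin m → Fin N) => x p.1 - x p.2 = t).card
    with hCntdef
  have hCnt : ∀ t, Cnt t =
    (Finset.univ.filter fun p : (Fin m → Fin N) × (Fin m → Fin N) => x p.1 - x p.2 = t).card :=
    fun t => rfl
  -- positivity of the quadratic form with all coefficients 1
  have hQpos : 0 ≤ ∑ k : Fin m → Fin N, ∑ l : Fin m → Fin N, f (x k - x l) := by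
    have h := hf (Fintype.card (Fin m → Fin N)) (x ∘ (Fintype.equivFin _).symm)
      (fun _ => Set.mem_univ _) (fun _ => 1)
    simp only [map_one, one_mul, Function.comp] at h
    refine le_trans h (le_of_eq ?_)
    exact Fintype.sum_equiv (Fintype.equivFin (Fin m → Fin N)).symm _ _
      (fun k => Fintype.sum_equiv (Fintype.equivFin (Fin m → Fin N)).symm _ _ (fun l => rfl))
  have hgroup := group_lemma f x T hT0
  -- key counting estimates
  have key : ∀ s ∈ T, (Cnt s : ℝ) ≤ (Cnt 0 : ℝ)
      ∧ (N : ℝ) * ((Cnt 0 : ℝ) - (Cnt s : ℝ)) ≤ (Cnt 0 : ℝ) := by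
    intro s hs
    obtain ⟨j, rfl⟩ := he s hs
    set A : Finset G := Finset.univ.image x with hA
    set B : Finset G := (Finset.range (N+1)).biUnion (fun r => A.image (· + r • e j)) with hBd2
    have hxA : ∀ k, x k ∈ A := fun k => Finset.mem_image.2 ⟨k, Finset.mem_univ _, rfl⟩
    have hAB : A ⊆ B := by
      intro a ha
      rw [hBd2]
      refine Finset.mem_biUnion.2 ⟨0, Finset.mem_range.2 (by omega),
        Finset.mem_image.2 ⟨a, ha, by simp⟩⟩
    have hxB : ∀ k, x k ∈ B := fun k => hAB (hxA k)
    have hMsupp : ∀ a ∉ A,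
        (Finset.univ.filter fun k : Fin m → Fin N => x k = a).card = 0 := by
      intro a ha
      rw [Finset.card_eq_zero, Finset.filter_eq_empty_iff]
      intro k _ hk
      exact ha (hk ▸ hxA k)
    have hRM : ∀ a : G,
        (Finset.univ.filter fun k : Fin m → Fin N => (k j : ℕ) = 0 ∧ x k = a).card
          ≤ (Finset.univ.filter fun k : Fin m → Fin N => x k = a).card := by
      intro a
      refine Finset.card_le_card (fun k hk => ?_)
      simp only [Finset.mem_filter] at hk ⊢
      exact ⟨hk.1, hk.2.2⟩
    have hMR : ∀ a : G, (Finset.univ.filter fun k : Fin m → Fin N => x k = a).card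
        = ∑ r ∈ Finset.range N, (Finset.univ.filter
            fun k : Fin m → Fin N => (k j : ℕ) = 0 ∧ x k = a - r • e j).card := by
      intro a
      rw [M_eq_sum_R hN e x hxeq j a, ← Fin.sum_univ_eq_sum_range]
    have hkb := key_bound2 hN (e j)
      (fun a => (Finset.univ.filter fun k : Fin m → Fin N => x k = a).card)
      (fun a => (Finset.univ.filter fun k : Fin m → Fin N => (k j : ℕ) = 0 ∧ x k = a).card)
      A hMsupp hRM hMR
    have hCs : (Cnt (e j) : ℝ) = ∑ a ∈ B,
        ((Finset.univ.filter fun k : Fin m → Fin N => x k = a).card : ℝ)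
          * ((Finset.univ.filter fun k : Fin m → Fin N => x k = a - e j).card : ℝ) := by
      rw [hCnt]
      exact count_pairs' x (e j) B hxB
    have hD : (Cnt 0 : ℝ) = ∑ a ∈ B,
        ((Finset.univ.filter fun k : Fin m → Fin N => x k = a).card : ℝ)
          * ((Finset.univ.filter fun k : Fin m → Fin N => x k = a).card : ℝ) := by
      rw [hCnt]
      rw [count_pairs' x 0 B hxB]
      simp only [sub_zero]
    rw [hCs, hD]
    constructor
    · exact hkb.1
    · exact hkb.2
  have hD1 : (1:ℝ) ≤ (Cnt 0 : ℝ) := by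
    have hpos : 0 < Cnt 0 := by
      rw [hCnt]
      refine Finset.card_pos.2 ⟨((fun _ => ⟨0, hN⟩ : Fin m → Fin N),
        (fun _ => ⟨0, hN⟩ : Fin m → Fin N)), ?_⟩
      simp
    exact_mod_cast hpos
  have hDpos : (0:ℝ) < (Cnt 0 : ℝ) := by linarith
  have hre : 0 ≤ ∑ s ∈ T, (Cnt s : ℝ) * (f s).re := by
    have h := hQpos
    rw [hgroup] at h
    have h2 := (Complex.le_def.1 h).1
    simp only [Complex.zero_re, Complex.re_sum] at h2
    refine le_trans h2 (le_of_eq (Finset.sum_congr rfl fun s _ => ?_))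
    rw [hCnt]
    simp [Complex.mul_re]
  have hstep : ∀ s ∈ T, (Cnt s : ℝ) * (f s).re
      ≤ (Cnt 0 : ℝ) * (f s).re + ((Cnt 0 : ℝ)/N) * ‖f s‖ := by
    intro s hs
    obtain ⟨hle, hNle⟩ := key s hs
    have hNpos : (0:ℝ) < (N:ℝ) := by exact_mod_cast hN
    have h1 : (Cnt 0 : ℝ) - (Cnt s : ℝ) ≤ (Cnt 0 : ℝ) / N := by
      rw [le_div_iff₀ hNpos]; nlinarith
    have h2 : |(f s).re| ≤ ‖f s‖ := Complex.abs_re_le_norm _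
    have h3 : 0 ≤ (Cnt 0 : ℝ)/N := by positivity
    rcases le_or_gt 0 ((f s).re) with hr | hr
    · nlinarith [norm_nonneg (f s)]
    · nlinarith [abs_of_neg hr]
  have hsum2 : 0 ≤ (Cnt 0 : ℝ) * (∑ s ∈ T, (f s).re) + ((Cnt 0 : ℝ)/N) * ∑ s ∈ T, ‖f s‖ := by
    calc (0:ℝ) ≤ ∑ s ∈ T, (Cnt s : ℝ) * (f s).re := hre
    _ ≤ ∑ s ∈ T, ((Cnt 0 : ℝ) * (f s).re + ((Cnt 0 : ℝ)/N) * ‖f s‖) :=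
        Finset.sum_le_sum hstep
    _ = (Cnt 0 : ℝ) * (∑ s ∈ T, (f s).re) + ((Cnt 0 : ℝ)/N) * ∑ s ∈ T, ‖f s‖ := by
        rw [Finset.sum_add_distrib, ← Finset.mul_sum, ← Finset.mul_sum]
  have hNpos : (0:ℝ) < (N:ℝ) := by exact_mod_cast hN
  rw [neg_le, ← sub_nonneg]
  have hfactor : (∑ s ∈ T, ‖f s‖) / N - -∑ s ∈ T, (f s).re
      = ((Cnt 0 : ℝ))⁻¹ * ((Cnt 0 : ℝ) * (∑ s ∈ T, (f s).re)
          + ((Cnt 0 : ℝ)/N) * ∑ s ∈ T, ‖f s‖) := by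
    field_simp
    ring
  rw [hfactor]
  positivity

private lemma sum_nonneg_of_posdef {G : Type*} [AddCommGroup G] {f : G → ℂ}
    (hf : IsPositiveDefiniteOn f Set.univ) (S : Finset G) (h0 : ∀ x ∉ S, f x = 0) :
    0 ≤ ∑ s ∈ S, f s := by
  classical
  set T : Finset G := S ∪ S.image (fun s => -s) with hTdef
  have hST : S ⊆ T := Finset.subset_union_left
  have hT0 : ∀ x ∉ T, f x = 0 := fun x hx => h0 x fun h => hx (hST h)
  have hsum : ∑ s ∈ S, f s = ∑ s ∈ T, f s :=
    Finset.sum_subset hST (fun x _ hx => h0 x hx)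
  rw [hsum]
  have hneg := pd_apply_neg hf
  have hTsym : ∀ s ∈ T, -s ∈ T := by
    intro s hs
    rcases Finset.mem_union.1 hs with h | h
    · exact Finset.mem_union_right _ (Finset.mem_image.2 ⟨s, h, rfl⟩)
    · rcases Finset.mem_image.1 h with ⟨a, ha, rfl⟩
      simpa using hST ha
  have hconj : (starRingEnd ℂ) (∑ s ∈ T, f s) = ∑ s ∈ T, f s := by
    rw [map_sum]
    calc ∑ s ∈ T, (starRingEnd ℂ) (f s) = ∑ s ∈ T, f (-s) :=
          Finset.sum_congr rfl fun s _ => (hneg s).symm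
    _ = ∑ s ∈ T, f s := by
        refine Finset.sum_nbij' (fun s => -s) (fun s => -s)
          (fun s hs => hTsym s hs) (fun s hs => hTsym s hs) ?_ ?_ ?_ <;> simp
  have him : (∑ s ∈ T, f s).im = 0 := by
    have h := congrArg Complex.im hconj
    simp only [Complex.conj_im] at h
    linarith
  have he : ∀ s ∈ T, ∃ j : Fin T.card, ((T.equivFin.symm j : {y // y ∈ T}) : G) = s :=
    fun s hs => ⟨T.equivFin ⟨s, hs⟩, by simp⟩
  have hBd0 : 0 ≤ ∑ s ∈ T, ‖f s‖ :=
    Finset.sum_nonneg fun s _ => norm_nonneg _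
  have main := fun (N : ℕ) (hN : 0 < N) =>
    main_bound hf T hT0 (fun j => ((T.equivFin.symm j : {y // y ∈ T}) : G)) he N hN
  have hu : 0 ≤ ∑ s ∈ T, (f s).re := by
    by_contra hcon
    push_neg at hcon
    obtain ⟨N, hNgt⟩ := exists_nat_gt ((∑ s ∈ T, ‖f s‖) / (-(∑ s ∈ T, (f s).re)))
    have hNpos : 0 < N := by
      have hdiv : (0:ℝ) ≤ (∑ s ∈ T, ‖f s‖) / (-(∑ s ∈ T, (f s).re)) :=
        div_nonneg hBd0 (by linarith)
      exact_mod_cast lt_of_le_of_lt hdiv hNgt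
    have h1 := main N hNpos
    have hupos : (0:ℝ) < -(∑ s ∈ T, (f s).re) := by linarith
    rw [div_lt_iff₀ hupos] at hNgt
    have hNR : (0:ℝ) < (N:ℝ) := by exact_mod_cast hNpos
    have hlt : (∑ s ∈ T, ‖f s‖) / N < -(∑ s ∈ T, (f s).re) := by
      rw [div_lt_iff₀ hNR]; nlinarith
    linarith
  rw [Complex.le_def]
  constructor
  · simpa [Complex.re_sum] using hu
  · simp [Complex.im_sum, him]

private lemma integral_nonneg_cplx {α : Type*} [MeasurableSpace α] (μ : Measure α)
    (h : α → ℂ) (hpos : ∀ t, 0 ≤ h t) : 0 ≤ ∫ t, h t ∂μ := by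
  have h1 : (fun t => h t) = fun t => (((h t).re : ℝ) : ℂ) := by
    funext t
    obtain ⟨hre, him⟩ := Complex.le_def.1 (hpos t)
    exact Complex.ext (by simp) (by simpa using him.symm)
  calc (0:ℂ) = ((0:ℝ):ℂ) := by simp
  _ ≤ ((∫ t, (h t).re ∂μ : ℝ) : ℂ) := by
      rw [Complex.real_le_real]
      exact integral_nonneg fun t => by simpa using (Complex.le_def.1 (hpos t)).1
  _ = ∫ t, (((h t).re : ℝ) : ℂ) ∂μ := (integral_ofReal).symm
  _ = ∫ t, h t ∂μ := by rw [← h1]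

private lemma conv_eq {G : Type*} [AddCommGroup G] [TopologicalSpace G]
    [IsTopologicalAddGroup G] [MeasurableSpace G] [BorelSpace G] [SecondCountableTopology G]
    (μ : Measure G) [μ.IsAddHaarMeasure] (φ : G → ℂ) (a b : G) :
    MeasureTheory.convolution φ (fun y => (starRingEnd ℂ) (φ (-y)))
        (ContinuousLinearMap.mul ℂ ℂ) μ (a - b)
      = ∫ t, φ (t + a) * (starRingEnd ℂ) (φ (t + b)) ∂μ := by
  rw [MeasureTheory.convolution_def]
  calc ∫ t, (ContinuousLinearMap.mul ℂ ℂ) (φ t) ((starRingEnd ℂ) (φ (-(a - b - t)))) ∂μ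
      = ∫ t, φ t * (starRingEnd ℂ) (φ (t - (a - b))) ∂μ := by
        congr 1
        funext t
        rw [ContinuousLinearMap.mul_apply', show -(a - b - t) = t - (a - b) from by abel]
  _ = ∫ t, φ (t + a) * (starRingEnd ℂ) (φ (t + a - (a - b))) ∂μ :=
      (integral_add_right_eq_self (fun t => φ t * (starRingEnd ℂ) (φ (t - (a - b)))) a).symm
  _ = ∫ t, φ (t + a) * (starRingEnd ℂ) (φ (t + b)) ∂μ := by
      congr 1
      funext t
      rw [show t + a - (a - b) = t + b from by abel]

private lemma translate_cont_integrable {G : Type*} [AddCommGroup G] [TopologicalSpace G]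
    [IsTopologicalAddGroup G] [MeasurableSpace G] [BorelSpace G] [T2Space G]
    (μ : Measure G) [μ.IsAddHaarMeasure]
    {φ : G → ℂ} (hφ : Continuous φ) (hφc : HasCompactSupport φ) (a b : G) (z w : ℂ) :
    Integrable (fun t => z * φ (t + a) * (starRingEnd ℂ) (w * φ (t + b))) μ := by
  have h1 : Continuous fun t : G => z * φ (t + a) :=
    continuous_const.mul (hφ.comp (continuous_add_right a))
  have h2 : Continuous fun t : G => (starRingEnd ℂ) (w * φ (t + b)) :=
    Complex.continuous_conj.comp (continuous_const.mul (hφ.comp (continuous_add_right b)))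
  have hc1 : HasCompactSupport fun t : G => z * φ (t + a) := by
    have := (hφc.comp_homeomorph (Homeomorph.addRight a))
    exact this.mul_left
  refine Continuous.integrable_of_hasCompactSupport (h1.mul h2) ?_
  exact hc1.mul_right

private lemma mul_conv_posdef {G : Type*} [AddCommGroup G] [TopologicalSpace G]
    [IsTopologicalAddGroup G] [MeasurableSpace G] [BorelSpace G] [T2Space G]
    [SecondCountableTopology G]
    (μ : Measure G) [μ.IsAddHaarMeasure] {c : G → ℂ}
    (hpd : IsPositiveDefiniteOn c Set.univ)
    {φ : G → ℂ} (hφ : Continuous φ) (hφc : HasCompactSupport φ) :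
    IsPositiveDefiniteOn (fun z => c z * MeasureTheory.convolution φ
      (fun y => (starRingEnd ℂ) (φ (-y))) (ContinuousLinearMap.mul ℂ ℂ) μ z) Set.univ := by
  intro n x _ d
  have hterm : ∀ k l : Fin n, d k * (starRingEnd ℂ) (d l) *
        (c (x k - x l) * MeasureTheory.convolution φ
          (fun y => (starRingEnd ℂ) (φ (-y))) (ContinuousLinearMap.mul ℂ ℂ) μ (x k - x l))
      = ∫ t, c (x k - x l) * (d k * φ (t + x k)) * (starRingEnd ℂ) (d l * φ (t + x l)) ∂μ := by
    intro k l
    calc d k * (starRingEnd ℂ) (d l) *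
          (c (x k - x l) * MeasureTheory.convolution φ
            (fun y => (starRingEnd ℂ) (φ (-y))) (ContinuousLinearMap.mul ℂ ℂ) μ (x k - x l))
        = (d k * (starRingEnd ℂ) (d l) * c (x k - x l))
            * ∫ t, φ (t + x k) * (starRingEnd ℂ) (φ (t + x l)) ∂μ := by
          rw [conv_eq μ φ (x k) (x l)]; ring
      _ = ∫ t, (d k * (starRingEnd ℂ) (d l) * c (x k - x l))
            * (φ (t + x k) * (starRingEnd ℂ) (φ (t + x l))) ∂μ :=
          (MeasureTheory.integral_const_mul _ _).symm
      _ = ∫ t, c (x k - x l) * (d k * φ (t + x k)) * (starRingEnd ℂ) (d l * φ (t + x l)) ∂μ := by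
          congr 1
          funext t
          rw [map_mul]
          ring
  have hint : ∀ p : Fin n × Fin n, Integrable
      (fun t => c (x p.1 - x p.2) * (d p.1 * φ (t + x p.1))
        * (starRingEnd ℂ) (d p.2 * φ (t + x p.2))) μ := by
    intro p
    have := (translate_cont_integrable μ hφ hφc (x p.1) (x p.2)
      (c (x p.1 - x p.2) * d p.1) (d p.2))
    refine this.congr (Filter.Eventually.of_forall fun t => ?_)
    ring
  have h2 : (∑ k, ∑ l, d k * (starRingEnd ℂ) (d l) *
        (c (x k - x l) * MeasureTheory.convolution φ
          (fun y => (starRingEnd ℂ) (φ (-y))) (ContinuousLinearMap.mul ℂ ℂ) μ (x k - x l)))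
      = ∫ t, ∑ p : Fin n × Fin n, c (x p.1 - x p.2) * (d p.1 * φ (t + x p.1))
          * (starRingEnd ℂ) (d p.2 * φ (t + x p.2)) ∂μ := by
    rw [MeasureTheory.integral_finset_sum _ (fun p _ => hint p)]
    rw [Fintype.sum_prod_type (f := fun p : Fin n × Fin n =>
      ∫ t, c (x p.1 - x p.2) * (d p.1 * φ (t + x p.1))
        * (starRingEnd ℂ) (d p.2 * φ (t + x p.2)) ∂μ)]
    exact Finset.sum_congr rfl fun k _ => Finset.sum_congr rfl fun l _ => hterm k l
  rw [h2]
  apply integral_nonneg_cplx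
  intro t
  have hq := hpd n x (fun _ => Set.mem_univ _) (fun k => d k * φ (t + x k))
  refine le_trans hq (le_of_eq ?_)
  rw [Fintype.sum_prod_type (f := fun p : Fin n × Fin n =>
    c (x p.1 - x p.2) * (d p.1 * φ (t + x p.1)) * (starRingEnd ℂ) (d p.2 * φ (t + x p.2)))]
  exact Finset.sum_congr rfl fun k _ => Finset.sum_congr rfl fun l _ => by ring

private lemma finite_inter_compact {G : Type*} [AddCommGroup G] [TopologicalSpace G]
    [IsTopologicalAddGroup G] {Λ : Set G}
    (hΛclosed : IsClosed Λ)
    (hud : ∃ U : Set G, IsOpen U ∧ (0 : G) ∈ U ∧ ∀ t : G, (Λ ∩ ((t + ·) '' U)).Subsingleton)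
    {K : Set G} (hK : IsCompact K) : (Λ ∩ K).Finite := by
  obtain ⟨U, hUo, hU0, hsub⟩ := hud
  have hcomp : IsCompact (Λ ∩ K) := hK.inter_left hΛclosed
  have hcover : Λ ∩ K ⊆ ⋃ t : G, (t + ·) '' U := by
    intro z _
    exact Set.mem_iUnion.2 ⟨z, ⟨0, hU0, by simp⟩⟩
  obtain ⟨F, hF⟩ := hcomp.elim_finite_subcover (fun t : G => (t + ·) '' U)
    (fun t => (Homeomorph.addLeft t).isOpenMap U hUo) hcover
  have : Λ ∩ K ⊆ ⋃ t ∈ F, (Λ ∩ ((t + ·) '' U)) := by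
    intro z hz
    obtain ⟨t, htF, hzt⟩ := Set.mem_iUnion₂.1 (hF hz)
    exact Set.mem_iUnion₂.2 ⟨t, htF, ⟨hz.1, hzt⟩⟩
  refine Set.Finite.subset (Set.Finite.biUnion F.finite_toSet (fun t _ => ?_)) this
  exact (hsub t).finite

private lemma forward_dir {G : Type*}
    [AddCommGroup G] [TopologicalSpace G] [IsTopologicalAddGroup G]
    [LocallyCompactSpace G] [SecondCountableTopology G] [T2Space G]
    [MeasurableSpace G] [BorelSpace G]
    (μ : Measure G) [μ.IsAddHaarMeasure]
    (Λ : Set G) (hΛclosed : IsClosed Λ) (hΛud : UniformlyDiscrete Λ)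
    (c : G → ℂ) (hc0 : ∀ x ∉ Λ, c x = 0)
    (hpd : IsPositiveDefiniteOn c Set.univ) : DiracCombIsPositiveDefinite μ c := by
  intro φ hφ hφc
  have hφtc : HasCompactSupport fun y : G => (starRingEnd ℂ) (φ (-y)) := by
    have h1 : HasCompactSupport (φ ∘ (Homeomorph.neg G)) :=
      hφc.comp_homeomorph (Homeomorph.neg G)
    have h2 := h1.comp_left (g := (starRingEnd ℂ)) (map_zero _)
    exact h2
  have hconvc : HasCompactSupport (MeasureTheory.convolution φ
      (fun y => (starRingEnd ℂ) (φ (-y))) (ContinuousLinearMap.mul ℂ ℂ) μ) :=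
    HasCompactSupport.convolution (ContinuousLinearMap.mul ℂ ℂ) hφc hφtc
  have hsupp : Function.support (fun z => c z * MeasureTheory.convolution φ
      (fun y => (starRingEnd ℂ) (φ (-y))) (ContinuousLinearMap.mul ℂ ℂ) μ z)
      ⊆ Λ ∩ tsupport (MeasureTheory.convolution φ
        (fun y => (starRingEnd ℂ) (φ (-y))) (ContinuousLinearMap.mul ℂ ℂ) μ) := by
    intro z hz
    constructor
    · by_contra hzΛ
      refine hz ?_
      show c z * _ = 0
      rw [hc0 z hzΛ, zero_mul]
    · refine subset_tsupport _ ?_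
      intro h
      refine hz ?_
      show c z * _ = 0
      rw [h, mul_zero]
  have hfin : (Function.support (fun z => c z * MeasureTheory.convolution φ
      (fun y => (starRingEnd ℂ) (φ (-y))) (ContinuousLinearMap.mul ℂ ℂ) μ z)).Finite :=
    Set.Finite.subset (finite_inter_compact hΛclosed hΛud hconvc) hsupp
  rw [tsum_eq_sum (s := hfin.toFinset)
    (fun b hb => Function.notMem_support.1 (fun h => hb (hfin.mem_toFinset.2 h)))]
  exact sum_nonneg_of_posdef (mul_conv_posdef μ hpd hφ hφc) hfin.toFinset
    (fun z hz => Function.notMem_support.1 (fun h => hz (hfin.mem_toFinset.2 h)))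

-- reverse direction (appended after h.lean content in final file; for testing we re-import)
private lemma translate_cont_integrable' {G : Type*} [AddCommGroup G] [TopologicalSpace G]
    [IsTopologicalAddGroup G] [MeasurableSpace G] [BorelSpace G] [T2Space G]
    (μ : Measure G) [μ.IsAddHaarMeasure]
    {ψ : G → ℂ} (hψ : Continuous ψ) (hψc : HasCompactSupport ψ) (a b : G) (z w : ℂ) :
    Integrable (fun t => z * ψ (t - a) * (starRingEnd ℂ) (w * ψ (t - b))) μ := by
  have h1 : Continuous fun t : G => z * ψ (t - a) :=
    continuous_const.mul (hψ.comp (continuous_sub_right a))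
  have h2 : Continuous fun t : G => (starRingEnd ℂ) (w * ψ (t - b)) :=
    Complex.continuous_conj.comp (continuous_const.mul (hψ.comp (continuous_sub_right b)))
  have hc1 : HasCompactSupport fun t : G => z * ψ (t - a) := by
    have := (hψc.comp_homeomorph (Homeomorph.subRight a))
    exact this.mul_left
  exact Continuous.integrable_of_hasCompactSupport (h1.mul h2) hc1.mul_right

private lemma reverse_dir {G : Type*}
    [AddCommGroup G] [TopologicalSpace G] [IsTopologicalAddGroup G]
    [LocallyCompactSpace G] [SecondCountableTopology G] [T2Space G]
    [MeasurableSpace G] [BorelSpace G]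
    (μ : Measure G) [μ.IsAddHaarMeasure]
    (Λ : Set G) (hΛclosed : IsClosed Λ) (hΛud : UniformlyDiscrete Λ)
    (c : G → ℂ) (hc0 : ∀ x ∉ Λ, c x = 0)
    (hcomb : DiracCombIsPositiveDefinite μ c) : IsPositiveDefiniteOn c Set.univ := by
  intro n x _ d
  classical
  obtain ⟨K₀, hK₀c, hK₀n⟩ := exists_compact_mem_nhds (0 : G)
  set E : Set G := (fun p : G × G => p.1 - p.2) '' (K₀ ×ˢ K₀) with hEdef
  have hEc : IsCompact E := (hK₀c.prod hK₀c).image continuous_sub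
  have hfin1 : ∀ w : G, (Λ ∩ ((w + ·) '' E)).Finite := fun w =>
    finite_inter_compact hΛclosed hΛud (hEc.image (continuous_add_left w))
  set Z : Set G := (⋃ p : Fin n × Fin n, (fun lam => lam - (x p.1 - x p.2)) ''
      (Λ ∩ (((x p.1 - x p.2) + ·) '' E))) \ {0} with hZdef
  have hZfin : Z.Finite :=
    Set.Finite.diff (Set.finite_iUnion fun p => (hfin1 _).image _)
  have hZ0 : (0:G) ∉ Z := fun h => h.2 rfl
  have hZclosed : IsClosed Z := hZfin.isClosed
  have hopen : IsOpen ((fun q : G × G => q.1 - q.2) ⁻¹' Zᶜ) :=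
    hZclosed.isOpen_compl.preimage continuous_sub
  have h00 : ((0:G),(0:G)) ∈ (fun q : G × G => q.1 - q.2) ⁻¹' Zᶜ := by
    simpa using hZ0
  obtain ⟨V₁, V₂, hV₁o, hV₂o, h0V₁, h0V₂, hVsub⟩ := isOpen_prod_iff.1 hopen 0 0 h00
  set V : Set G := V₁ ∩ V₂ ∩ interior K₀ with hVdef
  have hVo : IsOpen V := (hV₁o.inter hV₂o).inter isOpen_interior
  have h0V : (0:G) ∈ V := ⟨⟨h0V₁, h0V₂⟩, mem_interior_iff_mem_nhds.2 hK₀n⟩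
  have hVV : ∀ a ∈ V, ∀ b ∈ V, a - b ∉ Z := by
    intro a ha b hb
    have h := hVsub (Set.mk_mem_prod ha.1.1 hb.1.2)
    exact h
  have hVK : V ⊆ K₀ := fun y hy => interior_subset hy.2
  -- Urysohn bump
  obtain ⟨ψ, hψ1, hψ0, hψcs, hψmem⟩ := exists_continuous_one_zero_of_isCompact
    (isCompact_singleton : IsCompact ({0} : Set G)) hVo.isClosed_compl
    (Set.disjoint_singleton_left.2 (by simpa using h0V))
  have hψsupp : ∀ y ∉ V, ψ y = 0 := fun y hy => hψ0 (by simpa using hy)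
  have hψ01 : ψ 0 = 1 := hψ1 rfl
  set ψc : G → ℂ := fun t => ((ψ t : ℝ) : ℂ) with hψcdef
  have hψccont : Continuous ψc := Complex.continuous_ofReal.comp ψ.continuous
  have hψcc : HasCompactSupport ψc :=
    hψcs.comp_left (g := fun r : ℝ => (r:ℂ)) Complex.ofReal_zero
  set φ : G → ℂ := fun t => ∑ k, d k * ψc (t - x k) with hφdef
  have hφcont : Continuous φ :=
    continuous_finset_sum _ fun k _ => continuous_const.mul
      (hψccont.comp (continuous_sub_right (x k)))
  have hφcs : HasCompactSupport φ := by
    refine HasCompactSupport.intro (K := ⋃ k : Fin n, ((· + x k) '' tsupport ψc))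
      (isCompact_iUnion fun k => (hψcc.image (continuous_add_right (x k)))) ?_
    intro t ht
    have hterm : ∀ k : Fin n, ψc (t - x k) = 0 := by
      intro k
      apply image_eq_zero_of_notMem_tsupport
      intro hmem
      exact ht (Set.mem_iUnion.2 ⟨k, ⟨t - x k, hmem, by simp⟩⟩)
    show ∑ k, d k * ψc (t - x k) = 0
    exact Finset.sum_eq_zero fun k _ => by rw [hterm k, mul_zero]
  set hfun : G → ℂ := fun w => ∫ t, ψc t * (starRingEnd ℂ) (ψc (t - w)) ∂μ with hfundef
  have hfun_supp : ∀ w : G, hfun w ≠ 0 → ∃ t : G, ψ t ≠ 0 ∧ ψ (t - w) ≠ 0 := by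
    intro w hw
    by_contra hno
    push_neg at hno
    apply hw
    have hzero : ∀ t : G, ψc t * (starRingEnd ℂ) (ψc (t - w)) = 0 := by
      intro t
      by_cases h : ψ t = 0
      · simp [hψcdef, h]
      · simp [hψcdef, hno t h]
    show (∫ t, ψc t * (starRingEnd ℂ) (ψc (t - w)) ∂μ) = 0
    simp [funext hzero]
  -- expansion of the convolution of φ
  have hexp : ∀ z : G, MeasureTheory.convolution φ (fun y => (starRingEnd ℂ) (φ (-y)))
      (ContinuousLinearMap.mul ℂ ℂ) μ z
      = ∑ k, ∑ l, d k * (starRingEnd ℂ) (d l) * hfun (z - x k + x l) := by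
    intro z
    rw [MeasureTheory.convolution_def]
    have h1 : ∀ t : G, (ContinuousLinearMap.mul ℂ ℂ) (φ t) ((starRingEnd ℂ) (φ (-(z - t))))
        = ∑ p : Fin n × Fin n, (d p.1 * (starRingEnd ℂ) (d p.2))
            * (ψc (t - x p.1) * (starRingEnd ℂ) (ψc (t - (z + x p.2)))) := by
      intro t
      rw [ContinuousLinearMap.mul_apply', show -(z - t) = t - z from by abel]
      show (∑ k, d k * ψc (t - x k)) * (starRingEnd ℂ) (∑ l, d l * ψc (t - z - x l)) = _
      rw [map_sum, Finset.sum_mul_sum]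
      rw [Fintype.sum_prod_type (f := fun p : Fin n × Fin n =>
        (d p.1 * (starRingEnd ℂ) (d p.2))
          * (ψc (t - x p.1) * (starRingEnd ℂ) (ψc (t - (z + x p.2)))))]
      refine Finset.sum_congr rfl fun k _ => Finset.sum_congr rfl fun l _ => ?_
      rw [map_mul, show t - z - x l = t - (z + x l) from by abel]
      ring
    rw [show (fun t => (ContinuousLinearMap.mul ℂ ℂ) (φ t) ((starRingEnd ℂ) (φ (-(z - t)))))
      = fun t => ∑ p : Fin n × Fin n, (d p.1 * (starRingEnd ℂ) (d p.2))
          * (ψc (t - x p.1) * (starRingEnd ℂ) (ψc (t - (z + x p.2)))) from funext h1]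
    rw [MeasureTheory.integral_finset_sum _ (fun p _ => ?_)]
    swap
    · have := translate_cont_integrable' μ hψccont hψcc (x p.1) (z + x p.2)
        (d p.1) (d p.2)
      refine this.congr (Filter.Eventually.of_forall fun t => ?_)
      simp only [map_mul]
      ring
    rw [Fintype.sum_prod_type (f := fun p : Fin n × Fin n =>
      ∫ t, (d p.1 * (starRingEnd ℂ) (d p.2))
        * (ψc (t - x p.1) * (starRingEnd ℂ) (ψc (t - (z + x p.2)))) ∂μ)]
    refine Finset.sum_congr rfl fun k _ => Finset.sum_congr rfl fun l _ => ?_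
    rw [MeasureTheory.integral_const_mul]
    congr 1
    have h2 := integral_add_right_eq_self (μ := μ)
      (fun t => ψc (t - x k) * (starRingEnd ℂ) (ψc (t - (z + x l)))) (x k)
    rw [← h2]
    show (∫ t, ψc (t + x k - x k) * (starRingEnd ℂ) (ψc (t + x k - (z + x l))) ∂μ) = hfun (z - x k + x l)
    rw [hfundef]
    congr 1
    funext t
    rw [show t + x k - x k = t from by abel,
      show t + x k - (z + x l) = t - (z - x k + x l) from by abel]
  -- φ-tilde compact support, convolution compact support
  have hφtc : HasCompactSupport fun y : G => (starRingEnd ℂ) (φ (-y)) := by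
    have h1 : HasCompactSupport (φ ∘ (Homeomorph.neg G)) :=
      hφcs.comp_homeomorph (Homeomorph.neg G)
    exact h1.comp_left (g := (starRingEnd ℂ)) (map_zero _)
  have hconvc : HasCompactSupport (MeasureTheory.convolution φ
      (fun y => (starRingEnd ℂ) (φ (-y))) (ContinuousLinearMap.mul ℂ ℂ) μ) :=
    HasCompactSupport.convolution (ContinuousLinearMap.mul ℂ ℂ) hφcs hφtc
  -- the finite set S of relevant points
  have hSfin : ((Λ ∩ tsupport (MeasureTheory.convolution φ
      (fun y => (starRingEnd ℂ) (φ (-y))) (ContinuousLinearMap.mul ℂ ℂ) μ))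
      ∪ (Λ ∩ Set.range (fun p : Fin n × Fin n => x p.1 - x p.2))).Finite :=
    (finite_inter_compact hΛclosed hΛud hconvc).union
      ((Set.finite_range _).inter_of_right Λ)
  have htsum : (∑' z : G, c z * MeasureTheory.convolution φ
      (fun y => (starRingEnd ℂ) (φ (-y))) (ContinuousLinearMap.mul ℂ ℂ) μ z)
      = ∑ z ∈ hSfin.toFinset, c z * MeasureTheory.convolution φ
        (fun y => (starRingEnd ℂ) (φ (-y))) (ContinuousLinearMap.mul ℂ ℂ) μ z := by
    refine tsum_eq_sum fun z hz => ?_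
    by_cases hzΛ : z ∈ Λ
    · have hzt : z ∉ tsupport (MeasureTheory.convolution φ
          (fun y => (starRingEnd ℂ) (φ (-y))) (ContinuousLinearMap.mul ℂ ℂ) μ) := by
        intro ht
        exact hz (hSfin.mem_toFinset.2 (Or.inl ⟨hzΛ, ht⟩))
      rw [image_eq_zero_of_notMem_tsupport hzt, mul_zero]
    · rw [hc0 z hzΛ, zero_mul]
  -- key collapsing of the sums
  have hvan : ∀ (k l : Fin n), ∀ z ∈ Λ, z ≠ x k - x l → hfun (z - x k + x l) = 0 := by
    intro k l z hzΛ hzne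
    by_contra hne
    obtain ⟨t, ht1, ht2⟩ := hfun_supp _ hne
    have htV : t ∈ V := by by_contra h; exact ht1 (hψsupp t h)
    have ht2V : t - (z - x k + x l) ∈ V := by by_contra h; exact ht2 (hψsupp _ h)
    have hwZ : z - x k + x l ∉ Z := by
      have h := hVV t htV (t - (z - x k + x l)) ht2V
      simpa [show t - (t - (z - x k + x l)) = z - x k + x l from by abel] using h
    apply hwZ
    refine ⟨Set.mem_iUnion.2 ⟨(k,l), ?_⟩, ?_⟩
    · refine ⟨z, ⟨hzΛ, ?_⟩, by show z - (x k - x l) = z - x k + x l; abel⟩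
      refine ⟨z - x k + x l, ?_, by show (x k - x l) + (z - x k + x l) = z; abel⟩
      have hmemE : t - (t - (z - x k + x l)) ∈ E :=
        ⟨(t, t - (z - x k + x l)), Set.mk_mem_prod (hVK htV) (hVK ht2V), rfl⟩
      simpa [show t - (t - (z - x k + x l)) = z - x k + x l from by abel] using hmemE
    · intro h0
      apply hzne
      have h1 : z - x k + x l = 0 := by simpa using h0
      have : z = x k - x l := by
        have := sub_eq_zero.1 (by rw [show z - (x k - x l) = z - x k + x l from by abel]; exact h1)
        exact this
      exact this
  have hkey : ∀ k l : Fin n, (∑ z ∈ hSfin.toFinset, c z * hfun (z - x k + x l))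
      = c (x k - x l) * hfun 0 := by
    intro k l
    by_cases hmem : x k - x l ∈ Λ
    · have hmemS : x k - x l ∈ hSfin.toFinset :=
        hSfin.mem_toFinset.2 (Or.inr ⟨hmem, Set.mem_range.2 ⟨(k,l), rfl⟩⟩)
      rw [Finset.sum_eq_single_of_mem (x k - x l) hmemS ?_]
      · rw [show x k - x l - x k + x l = (0:G) from by abel]
      · intro z hzS hzne
        have hzΛ : z ∈ Λ := by
          rcases hSfin.mem_toFinset.1 hzS with h | h
          · exact h.1
          · exact h.1
        rw [hvan k l z hzΛ hzne, mul_zero]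
    · rw [hc0 _ hmem, zero_mul]
      refine Finset.sum_eq_zero fun z hzS => ?_
      have hzΛ : z ∈ Λ := by
        rcases hSfin.mem_toFinset.1 hzS with h | h
        · exact h.1
        · exact h.1
      have hzne : z ≠ x k - x l := fun h => hmem (h ▸ hzΛ)
      rw [hvan k l z hzΛ hzne, mul_zero]
  -- put everything together
  have hcomb2 := hcomb φ hφcont hφcs
  rw [htsum] at hcomb2
  have hfinal : (∑ z ∈ hSfin.toFinset, c z * MeasureTheory.convolution φ
        (fun y => (starRingEnd ℂ) (φ (-y))) (ContinuousLinearMap.mul ℂ ℂ) μ z)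
      = (∑ k, ∑ l, d k * (starRingEnd ℂ) (d l) * c (x k - x l)) * hfun 0 := by
    calc (∑ z ∈ hSfin.toFinset, c z * MeasureTheory.convolution φ
          (fun y => (starRingEnd ℂ) (φ (-y))) (ContinuousLinearMap.mul ℂ ℂ) μ z)
        = ∑ z ∈ hSfin.toFinset, ∑ k, ∑ l,
            d k * (starRingEnd ℂ) (d l) * (c z * hfun (z - x k + x l)) := by
          refine Finset.sum_congr rfl fun z _ => ?_
          rw [hexp z, Finset.mul_sum]
          refine Finset.sum_congr rfl fun k _ => ?_
          rw [Finset.mul_sum]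
          exact Finset.sum_congr rfl fun l _ => by ring
      _ = ∑ k, ∑ l, d k * (starRingEnd ℂ) (d l) *
            (∑ z ∈ hSfin.toFinset, c z * hfun (z - x k + x l)) := by
          rw [Finset.sum_comm]
          refine Finset.sum_congr rfl fun k _ => ?_
          rw [Finset.sum_comm]
          refine Finset.sum_congr rfl fun l _ => ?_
          rw [Finset.mul_sum]
      _ = ∑ k, ∑ l, d k * (starRingEnd ℂ) (d l) * (c (x k - x l) * hfun 0) := by
          refine Finset.sum_congr rfl fun k _ => Finset.sum_congr rfl fun l _ => ?_
          rw [hkey k l]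
      _ = (∑ k, ∑ l, d k * (starRingEnd ℂ) (d l) * c (x k - x l)) * hfun 0 := by
          rw [Finset.sum_mul]
          refine Finset.sum_congr rfl fun k _ => ?_
          rw [Finset.sum_mul]
          exact Finset.sum_congr rfl fun l _ => by ring
  rw [hfinal] at hcomb2
  -- hfun 0 is a positive real
  have hfun0 : hfun 0 = ((∫ t, (ψ t)^2 ∂μ : ℝ) : ℂ) := by
    rw [hfundef]
    have hzero : (fun t => ψc t * (starRingEnd ℂ) (ψc (t - 0)))
        = fun t => (((ψ t)^2 : ℝ) : ℂ) := by
      funext t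
      rw [sub_zero, hψcdef]
      simp [Complex.conj_ofReal]
      push_cast
      ring
    show (∫ t, ψc t * (starRingEnd ℂ) (ψc (t - 0)) ∂μ) = ((∫ t, (ψ t)^2 ∂μ : ℝ) : ℂ)
    rw [hzero]
    exact integral_ofReal
  have hintψ : Integrable (fun t => (ψ t)^2) μ := by
    have hcont : Continuous (fun t => (ψ t)^2) := (map_continuous ψ).pow 2
    have hcs : HasCompactSupport (fun t => (ψ t)^2) := by
      have h2 : (fun t => (ψ t)^2) = (⇑ψ * ⇑ψ) := by funext t; simp [sq]
      rw [h2]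
      exact hψcs.mul_right
    exact hcont.integrable_of_hasCompactSupport hcs
  have hpos0 : 0 < ∫ t, (ψ t)^2 ∂μ := by
    rw [integral_pos_iff_support_of_nonneg (fun t => sq_nonneg _) hintψ]
    have hopen2 : IsOpen (Function.support fun t => (ψ t)^2) := by
      rw [Function.support_eq_preimage]
      exact isOpen_compl_singleton.preimage ((map_continuous ψ).pow 2)
    refine hopen2.measure_pos μ ⟨0, ?_⟩
    simp [Function.mem_support, hψ01]
  -- extract positivity of the quadratic form
  rw [hfun0] at hcomb2
  obtain ⟨hre2, him2⟩ := Complex.le_def.1 hcomb2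
  rw [Complex.le_def]
  have hrcast : ((∫ t, (ψ t)^2 ∂μ : ℝ) : ℂ).re = ∫ t, (ψ t)^2 ∂μ := by simp
  constructor
  · have h1 : ((∑ k, ∑ l, d k * (starRingEnd ℂ) (d l) * c (x k - x l))
        * ((∫ t, (ψ t)^2 ∂μ : ℝ) : ℂ)).re
        = (∑ k, ∑ l, d k * (starRingEnd ℂ) (d l) * c (x k - x l)).re * ∫ t, (ψ t)^2 ∂μ := by
      rw [Complex.mul_re]
      simp
    rw [h1] at hre2
    simp only [Complex.zero_re] at hre2 ⊢
    nlinarith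
  · have h1 : ((∑ k, ∑ l, d k * (starRingEnd ℂ) (d l) * c (x k - x l))
        * ((∫ t, (ψ t)^2 ∂μ : ℝ) : ℂ)).im
        = (∑ k, ∑ l, d k * (starRingEnd ℂ) (d l) * c (x k - x l)).im * ∫ t, (ψ t)^2 ∂μ := by
      rw [Complex.mul_im]
      simp
    rw [h1] at him2
    simp only [Complex.zero_im] at him2 ⊢
    by_contra hne
    have := him2.symm
    have him3 : (∑ k, ∑ l, d k * (starRingEnd ℂ) (d l) * c (x k - x l)).im = 0 := by
      rcases mul_eq_zero.1 this with h | h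
      · exact h
      · exact absurd h (by positivity)
    exact hne him3.symm

theorem posDef_function_iff_diracComb_posDef {G : Type*}
    [AddCommGroup G] [TopologicalSpace G] [IsTopologicalAddGroup G]
    [LocallyCompactSpace G] [SecondCountableTopology G] [T2Space G]
    [MeasurableSpace G] [BorelSpace G]
    (μ : Measure G) [μ.IsAddHaarMeasure]
    (Λ : Set G) (hΛclosed : IsClosed Λ) (hΛud : UniformlyDiscrete Λ)
    (c : G → ℂ) (hcb : ∃ C : ℝ, ∀ x, ‖c x‖ ≤ C)
    (hc0 : ∀ x ∉ Λ, c x = 0) :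
    IsPositiveDefiniteOn c Set.univ ↔ DiracCombIsPositiveDefinite μ c := by
  constructor
  · exact forward_dir μ Λ hΛclosed hΛud c hc0
  · exact reverse_dir μ Λ hΛclosed hΛud c hc0
end
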